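/- Let y(t) be a nontrivial solution of the linear differential equation y^{(n)} + a_{n−1}(t) y^{(n−1)} + … + a_0(t) y = 0 whose coefficients are holomorphic on a closed line segment I ⊂ ℂ of length l with |a_j(t)| ≤ C for all j and all t ∈ I, where C ≥ 1. Then the variation of argument of y along I is at most π(n+1)(1 + lC/log(3/2)). -/

import Mathlib

open Complex Set

/-- Helper: from a finset of `m` zeros of `f` inside `[A,B]` one gets `m-1` zeros of `f'`,
each lying strictly between two zeros of `f`. -/
lemma yak_rolle_finset (f f' : ℝ → ℝ) (A B : ℝ)
    (hd : ∀ x ∈ Icc A B, HasDerivAt f (f' x) x) :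
    ∀ m : ℕ, ∀ Z : Finset ℝ, m ≤ Z.card → ↑Z ⊆ Icc A B → (∀ x ∈ Z, f x = 0) →
      ∃ Z' : Finset ℝ, m - 1 ≤ Z'.card ∧ ↑Z' ⊆ Icc A B ∧ (∀ x ∈ Z', f' x = 0) ∧
        (∀ u ∈ Z', ∃ x1 ∈ Z, ∃ x2 ∈ Z, x1 < u ∧ u < x2) := by
  intro m
  induction m with
  | zero => intro Z _ _ _; exact ⟨∅, by simp, by simp, by simp, by simp⟩
  | succ m ih =>
    intro Z hcard hsub hzero
    rcases Nat.eq_zero_or_pos m with hm | hm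
    · exact ⟨∅, by simp [hm], by simp, by simp, by simp⟩
    · have hZne : Z.Nonempty := Finset.card_pos.1 (by omega)
      set M1 := Z.max' hZne with hM1
      have hM1Z : M1 ∈ Z := Z.max'_mem hZne
      set Z2 := Z.erase M1 with hZ2
      have hZ2card : m ≤ Z2.card := by
        rw [hZ2, Finset.card_erase_of_mem hM1Z]; omega
      have hZ2ne : Z2.Nonempty := Finset.card_pos.1 (by omega)
      set M2 := Z2.max' hZ2ne with hM2
      have hM2Z2 : M2 ∈ Z2 := Z2.max'_mem hZ2ne
      have hM2Z : M2 ∈ Z := Finset.mem_of_mem_erase hM2Z2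
      have hM2M1 : M2 < M1 :=
        lt_of_le_of_ne (Z.le_max' _ hM2Z) (Finset.ne_of_mem_erase hM2Z2)
      have hIccsub : Icc M2 M1 ⊆ Icc A B :=
        Icc_subset_Icc (hsub hM2Z).1 (hsub hM1Z).2
      have hcontf : ContinuousOn f (Icc M2 M1) := fun x hx =>
        ((hd x (hIccsub hx)).continuousAt.continuousWithinAt)
      obtain ⟨c, hcIoo, hcder⟩ := exists_deriv_eq_zero hM2M1 hcontf
        (by rw [hzero M2 hM2Z, hzero M1 hM1Z])
      have hcI : c ∈ Icc A B := hIccsub (Ioo_subset_Icc_self hcIoo)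
      have hfc : f' c = 0 := by rw [← (hd c hcI).deriv]; exact hcder
      obtain ⟨Z2', hZ2'card, hZ2'sub, hZ2'zero, hZ2'btw⟩ :=
        ih Z2 hZ2card ((Finset.coe_subset.2 (Finset.erase_subset _ _)).trans hsub)
          (fun x hx => hzero x (Finset.mem_of_mem_erase hx))
      have hcnot : c ∉ Z2' := by
        intro hc
        obtain ⟨x1, _, x2, hx2, _, hux2⟩ := hZ2'btw c hc
        have hx2le : x2 ≤ M2 := Z2.le_max' _ hx2
        linarith [hcIoo.1]
      refine ⟨insert c Z2', ?_, ?_, ?_, ?_⟩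
      · rw [Finset.card_insert_of_notMem hcnot]; omega
      · intro u hu
        rcases Finset.mem_insert.1 (Finset.mem_coe.1 hu) with rfl | hu'
        · exact hcI
        · exact hZ2'sub (Finset.mem_coe.2 hu')
      · intro u hu
        rcases Finset.mem_insert.1 hu with rfl | hu'
        · exact hfc
        · exact hZ2'zero u hu'
      · intro u hu
        rcases Finset.mem_insert.1 hu with rfl | hu'
        · exact ⟨M2, hM2Z, M1, hM1Z, hcIoo.1, hcIoo.2⟩
        · obtain ⟨x1, h1, x2, h2, hl, hr⟩ := hZ2'btw u hu'
          exact ⟨x1, Finset.mem_of_mem_erase h1, x2, Finset.mem_of_mem_erase h2, hl, hr⟩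


lemma yak_exists_exp_im (w : ℂ) : ∃ β : ℝ, (Complex.exp (↑β * Complex.I) * w).im = ‖w‖ := by
  rcases eq_or_ne w 0 with rfl | hw
  · exact ⟨0, by simp⟩
  · set ζ : ℂ := Complex.I * (starRingEnd ℂ) w / (‖w‖ : ℂ) with hζ
    have hwn : (‖w‖ : ℝ) ≠ 0 := by simpa using hw
    have hwc : (‖w‖ : ℂ) ≠ 0 := by exact_mod_cast hwn
    have hcw : (starRingEnd ℂ) w * w = ((‖w‖ : ℂ)) * ((‖w‖ : ℂ)) := by
      rw [mul_comm, Complex.mul_conj]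
      rw [Complex.normSq_eq_norm_sq]
      push_cast
      ring
    have habs : ‖ζ‖ = 1 := by
      rw [hζ, norm_div, norm_mul]
      simp [hwn]
    refine ⟨ζ.arg, ?_⟩
    have hexp : Complex.exp (↑ζ.arg * Complex.I) = ζ := by
      have h := Complex.norm_mul_exp_arg_mul_I ζ
      rwa [habs, Complex.ofReal_one, one_mul] at h
    have hmul : ζ * w = Complex.I * (‖w‖ : ℂ) := by
      rw [hζ, div_mul_eq_mul_div, mul_assoc, hcw]
      rw [mul_div_assoc, mul_div_assoc, div_self hwc, mul_one]
    rw [hexp, hmul]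
    simp

lemma yak_geom (n : ℕ) (lam C : ℝ) (hlam : 0 ≤ lam) (hC : 1 ≤ C)
    (hsmall : lam * C ≤ Real.log (3 / 2)) :
    ∑ j ∈ Finset.range n, C * lam ^ (n - j) < 1 := by
  set ρ := Real.log (3 / 2) with hρ
  have hρpos : 0 < ρ := Real.log_pos (by norm_num)
  have hρhalf : ρ < 1 / 2 := by
    have := Real.log_lt_sub_one_of_pos (x := 3 / 2) (by norm_num) (by norm_num)
    linarith
  have hlamρ : lam ≤ ρ := by nlinarith
  have hlam1 : lam < 1 := by linarith
  have hrw : ∑ j ∈ Finset.range n, C * lam ^ (n - j)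
      = C * lam * ∑ i ∈ Finset.range n, lam ^ i := by
    rw [Finset.mul_sum]
    rw [← Finset.sum_range_reflect (fun i => C * lam * lam ^ i) n]
    refine Finset.sum_congr rfl fun j hj => ?_
    have hj' : j < n := Finset.mem_range.1 hj
    rw [show n - j = (n - 1 - j) + 1 from by omega, pow_succ', mul_assoc]
  rw [hrw]
  set S := ∑ i ∈ Finset.range n, lam ^ i with hS
  have hS0 : 0 ≤ S := Finset.sum_nonneg fun i _ => pow_nonneg hlam i
  have hSgeom : S * (1 - lam) = 1 - lam ^ n := by
    have h := geom_sum_mul lam n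
    nlinarith [h]
  have hlamn : 0 ≤ lam ^ n := pow_nonneg hlam n
  have hCl : 0 ≤ C * lam := mul_nonneg (by linarith) hlam
  have hClρ : C * lam ≤ ρ := by nlinarith
  nlinarith [mul_le_mul_of_nonneg_left (hSgeom.le.trans (by linarith : 1 - lam ^ n ≤ 1)) hCl]

lemma yak_piece (n : ℕ) (hn : 0 < n) (U : Set ℂ) (hU : IsOpen U) (z0 z1 : ℂ)
    (hseg : segment ℝ z0 z1 ⊆ U)
    (a : ℕ → ℂ → ℂ)
    (C : ℝ) (hC : 1 ≤ C)
    (hbound : ∀ j < n, ∀ t ∈ segment ℝ z0 z1, ‖a j t‖ ≤ C)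
    (y : ℂ → ℂ)
    (hyD : ∀ j : ℕ, DifferentiableOn ℂ (iteratedDeriv j y) U)
    (hode : ∀ t ∈ U,
      iteratedDeriv n y t + ∑ j ∈ Finset.range n, a j t * iteratedDeriv j y t = 0)
    (hnz : ∀ t ∈ segment ℝ z0 z1, y t ≠ 0)
    (θ : ℝ → ℝ) (hθ : ContinuousOn θ (Icc (0:ℝ) 1))
    (hbranch : ∀ s ∈ Icc (0:ℝ) 1,
      y (z0 + (s : ℂ) * (z1 - z0)) =
        (‖y (z0 + (s : ℂ) * (z1 - z0))‖ : ℂ) * Complex.exp (θ s * Complex.I))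
    (A B : ℝ) (hab : A < B) (hA : 0 ≤ A) (hB : B ≤ 1)
    (hsmall : (B - A) * ‖z1 - z0‖ * C ≤ Real.log (3 / 2)) :
    |θ B - θ A| ≤ Real.pi * (n + 1) := by
  by_contra hcon
  push_neg at hcon
  have hπ : (0:ℝ) < Real.pi := Real.pi_pos
  set γ : ℝ → ℂ := fun s => z0 + (s : ℂ) * (z1 - z0) with hγdef
  have hsub : Icc A B ⊆ Icc (0:ℝ) 1 := Icc_subset_Icc hA hB
  have hγseg : ∀ s ∈ Icc (0:ℝ) 1, γ s ∈ segment ℝ z0 z1 := by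
    intro s hs
    rw [segment_eq_image' ℝ z0 z1]
    exact ⟨s, hs, by simp [hγdef, Complex.real_smul]⟩
  have hγcont : Continuous γ := by
    simp only [hγdef]
    exact continuous_const.add (Complex.continuous_ofReal.mul continuous_const)
  set Ω : Set ℝ := γ ⁻¹' U with hΩdef
  have hΩ : IsOpen Ω := hU.preimage hγcont
  have hΩ1 : Icc (0:ℝ) 1 ⊆ Ω := fun s hs => hseg (hγseg s hs)
  have hABΩ : Icc A B ⊆ Ω := fun s hs => hΩ1 (hsub hs)
  have hγU : ∀ s ∈ Icc A B, γ s ∈ U := fun s hs => hABΩ hs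
  -- derivative of γ
  have hγd : ∀ s : ℝ, HasDerivAt γ (z1 - z0) s := by
    intro s
    have h1 : HasDerivAt (fun t : ℝ => (t : ℂ)) 1 s := by
      simpa using (hasDerivAt_id s).ofReal_comp
    have h5 := (h1.mul_const (z1 - z0)).const_add z0
    simp only [one_mul] at h5
    exact h5
  set v : ℕ → ℝ → ℂ := fun k s => (z1 - z0) ^ k * iteratedDeriv k y (γ s) with hvdef
  have hder : ∀ k : ℕ, ∀ s ∈ Ω, HasDerivAt (v k) (v (k + 1) s) s := by
    intro k s hs
    have hsU : γ s ∈ U := hs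
    have h2 : HasDerivAt (iteratedDeriv k y) (iteratedDeriv (k + 1) y (γ s)) (γ s) := by
      have hdiff : DifferentiableAt ℂ (iteratedDeriv k y) (γ s) :=
        (hyD k).differentiableAt (hU.mem_nhds hsU)
      rw [iteratedDeriv_succ]
      exact hdiff.hasDerivAt
    have h3 := ((hasDerivAt_iff_hasFDerivAt.1 h2).restrictScalars ℝ).comp_hasDerivAt s (hγd s)
    simp only [Function.comp_def, ContinuousLinearMap.coe_restrictScalars',
      ContinuousLinearMap.smulRight_apply, ContinuousLinearMap.one_apply, smul_eq_mul] at h3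
    have h4 := h3.const_mul ((z1 - z0) ^ k)
    have : v (k + 1) s = (z1 - z0) ^ k * ((z1 - z0) * iteratedDeriv (k + 1) y (γ s)) := by
      simp only [hvdef]; ring
    rw [this]
    exact h4
  have hcont : ∀ k : ℕ, ContinuousOn (v k) (Icc A B) := fun k s hs =>
    ((hder k s (hABΩ hs)).continuousAt.continuousWithinAt)
  -- maxima of the derivatives on [A,B]
  have hMex : ∀ j : ℕ, ∃ M : ℝ, 0 ≤ M ∧ (∀ s ∈ Icc A B, ‖v j s‖ ≤ M) ∧
      ∃ s ∈ Icc A B, ‖v j s‖ = M := by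
    intro j
    obtain ⟨s0, hs0, hmax⟩ := isCompact_Icc.exists_isMaxOn (f := fun s => ‖v j s‖)
      (nonempty_Icc.2 hab.le) (hcont j).norm
    exact ⟨‖v j s0‖, norm_nonneg _, fun s hs => hmax hs, s0, hs0, rfl⟩
  choose M hM0 hMub hMat using hMex
  set l : ℝ := ‖z1 - z0‖ with hldef
  set R : ℝ := ∑ j ∈ Finset.range n, C * l ^ (n - j) * M j with hRdef
  have hR0 : 0 ≤ R := Finset.sum_nonneg fun j _ =>
    mul_nonneg (mul_nonneg (by linarith) (pow_nonneg (norm_nonneg _) _)) (hM0 j)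
  -- the ODE bound on `v n`
  have hvn : ∀ s ∈ Icc A B, ‖v n s‖ ≤ R := by
    intro s hs
    have hU' : γ s ∈ U := hγU s hs
    have h0 := hode (γ s) hU'
    have hit : iteratedDeriv n y (γ s)
        = -∑ j ∈ Finset.range n, a j (γ s) * iteratedDeriv j y (γ s) := by
      linear_combination h0
    have hvneq : v n s = -∑ j ∈ Finset.range n,
        a j (γ s) * ((z1 - z0) ^ (n - j) * v j s) := by
      simp only [hvdef, hit, mul_neg, neg_inj, Finset.mul_sum]
      refine Finset.sum_congr rfl fun j hj => ?_
      have hj' : j < n := Finset.mem_range.1 hj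
      rw [show (z1 - z0) ^ n = (z1 - z0) ^ (n - j) * (z1 - z0) ^ j from by
        rw [← pow_add]; congr 1; omega]
      ring
    rw [hvneq, norm_neg]
    refine (norm_sum_le _ _).trans ?_
    rw [hRdef]
    refine Finset.sum_le_sum fun j hj => ?_
    have hj' : j < n := Finset.mem_range.1 hj
    have h1 := hbound j hj' (γ s) (hγseg s (hsub hs))
    have h2 := hMub j s hs
    rw [norm_mul, norm_mul, norm_pow]
    rw [mul_assoc]
    have hpw : (0:ℝ) ≤ ‖z1 - z0‖ ^ (n - j) := pow_nonneg (norm_nonneg _) _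
    refine mul_le_mul h1 ?_ (mul_nonneg hpw (norm_nonneg _)) (by linarith)
    exact mul_le_mul_of_nonneg_left h2 hpw
  -- the rotated real parts
  set g : ℝ → ℕ → ℝ → ℝ := fun β k s => (Complex.exp (↑β * Complex.I) * v k s).im with hgdef
  have hgder : ∀ (β : ℝ) (k : ℕ), ∀ s ∈ Ω, HasDerivAt (g β k) (g β (k + 1) s) s := by
    intro β k s hs
    have h1 := (hder k s hs).const_mul (Complex.exp (↑β * Complex.I))
    have h2 := Complex.imCLM.hasFDerivAt.comp_hasDerivAt s h1
    simpa [hgdef, Function.comp_def] using h2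
  have hgcont : ∀ (β : ℝ) (k : ℕ), ContinuousOn (g β k) (Icc A B) := fun β k s hs =>
    ((hgder β k s (hABΩ hs)).continuousAt.continuousWithinAt)
  -- base zeros from the winding hypothesis
  have hbase : ∀ β : ℝ, ∃ Z : Finset ℝ, n ≤ Z.card ∧ ↑Z ⊆ Icc A B ∧
      ∀ x ∈ Z, g β 0 x = 0 := by
    intro β
    set w : ℝ := min (θ A) (θ B) with hw
    set W : ℝ := max (θ A) (θ B) with hW
    have hlen : Real.pi * (n + 1) < W - w := by
      rw [hW, hw, max_sub_min_eq_abs]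
      exact hcon
    have hθc : ContinuousOn θ (Icc A B) := hθ.mono hsub
    have hIVT : Icc w W ⊆ θ '' Icc A B := by
      have h := intermediate_value_uIcc (f := θ) (a := A) (b := B)
        (by rwa [uIcc_of_le hab.le])
      rw [uIcc_of_le hab.le] at h
      exact fun x hx => h hx
    set m0 : ℤ := ⌈(w + β) / Real.pi⌉ with hm0
    have hval : ∀ i : ℕ, i < n → (Real.pi * ((m0 : ℝ) + i) - β) ∈ Icc w W := by
      intro i hi
      have hc1 : (w + β) / Real.pi ≤ (m0 : ℝ) := Int.le_ceil _
      have hc2 : (m0 : ℝ) < (w + β) / Real.pi + 1 := Int.ceil_lt_add_one _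
      have hd1 : w + β ≤ Real.pi * (m0 : ℝ) := by
        rw [div_le_iff₀ hπ] at hc1; linarith
      have hd2 : Real.pi * (m0 : ℝ) < w + β + Real.pi := by
        have : (m0 : ℝ) - 1 < (w + β) / Real.pi := by linarith
        rw [lt_div_iff₀ hπ] at this; nlinarith
      have hi0 : (0:ℝ) ≤ (i:ℝ) := Nat.cast_nonneg i
      have hi1 : (i : ℝ) ≤ (n : ℝ) - 1 := by
        have : (i : ℝ) + 1 ≤ (n : ℝ) := by exact_mod_cast hi
        linarith
      have hπi0 : 0 ≤ Real.pi * (i : ℝ) := mul_nonneg hπ.le hi0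
      have hπi1 : Real.pi * (i : ℝ) ≤ Real.pi * ((n : ℝ) - 1) :=
        mul_le_mul_of_nonneg_left hi1 hπ.le
      constructor
      · nlinarith
      · nlinarith
    have hpre : ∀ i : Fin n, ∃ s ∈ Icc A B, θ s = Real.pi * ((m0 : ℝ) + i) - β :=
      fun i => hIVT (hval i i.2)
    choose sf hsfI hsfθ using hpre
    have hinj : Function.Injective sf := by
      intro i j hij
      have h1 : Real.pi * ((m0 : ℝ) + i) - β = Real.pi * ((m0 : ℝ) + j) - β := by
        rw [← hsfθ i, ← hsfθ j, hij]
      have h2 : ((i : ℕ) : ℝ) = ((j : ℕ) : ℝ) := by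
        have := mul_left_cancel₀ hπ.ne' (by linarith : Real.pi * ((m0 : ℝ) + i) = Real.pi * ((m0 : ℝ) + j))
        linarith
      exact Fin.ext (by exact_mod_cast h2)
    refine ⟨Finset.image sf Finset.univ, ?_, ?_, ?_⟩
    · rw [Finset.card_image_of_injective _ hinj, Finset.card_univ, Fintype.card_fin]
    · intro x hx
      simp only [Finset.coe_image, Finset.coe_univ, Set.image_univ, Set.mem_range] at hx
      obtain ⟨i, rfl⟩ := hx
      exact hsfI i
    · intro x hx
      simp only [Finset.mem_image, Finset.mem_univ, true_and] at hx
      obtain ⟨i, rfl⟩ := hx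
      have hb := hbranch (sf i) (hsub (hsfI i))
      simp only [hgdef, hvdef, pow_zero, one_mul, iteratedDeriv_zero]
      rw [show z0 + ((sf i : ℝ) : ℂ) * (z1 - z0) = γ (sf i) from rfl] at hb
      rw [hb, hsfθ i]
      rw [mul_comm (Complex.exp (↑β * Complex.I)) _, mul_assoc, ← Complex.exp_add]
      rw [show (↑(Real.pi * ((m0 : ℝ) + (i : ℕ)) - β) * Complex.I + ↑β * Complex.I : ℂ)
          = ↑((((m0 : ℤ) + (i : ℕ)) : ℝ) * Real.pi) * Complex.I from by push_cast; ring]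
      have him : (Complex.exp (↑((((m0 : ℤ) : ℝ) + ((i : ℕ) : ℝ)) * Real.pi) * Complex.I)).im
          = 0 := by
        rw [Complex.exp_ofReal_mul_I_im]
        exact_mod_cast Real.sin_int_mul_pi (m0 + (i : ℕ))
      rw [Complex.mul_im, him]
      simp
  -- Rolle descent
  have hzeros : ∀ β : ℝ, ∀ k : ℕ, k < n → ∃ Z : Finset ℝ, n - k ≤ Z.card ∧ ↑Z ⊆ Icc A B ∧
      ∀ x ∈ Z, g β k x = 0 := by
    intro β k
    induction k with
    | zero =>
      intro _
      obtain ⟨Z, h1, h2, h3⟩ := hbase β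
      exact ⟨Z, by simpa using h1, h2, h3⟩
    | succ k ih =>
      intro hk
      obtain ⟨Z, h1, h2, h3⟩ := ih (by omega)
      obtain ⟨Z', h1', h2', h3', _⟩ := yak_rolle_finset (g β k) (g β (k + 1)) A B
        (fun x hx => hgder β k x (hABΩ hx)) (n - k) Z h1 h2 h3
      exact ⟨Z', by omega, h2', h3'⟩
  -- the quantitative chain
  have hBA0 : (0:ℝ) ≤ B - A := by linarith
  have hchain : ∀ β : ℝ, ∀ d : ℕ, d ≤ n → ∀ s ∈ Icc A B,
      |g β (n - d) s| ≤ (B - A) ^ d * R := by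
    intro β d
    induction d with
    | zero =>
      intro _ s hs
      have h1 : |g β n s| ≤ ‖Complex.exp (↑β * Complex.I) * v n s‖ := by
        exact Complex.abs_im_le_norm _
      rw [Nat.sub_zero, pow_zero, one_mul]
      refine h1.trans ?_
      rw [norm_mul]
      have h2 : ‖Complex.exp (↑β * Complex.I)‖ = 1 := by
        simpa using Complex.norm_exp_ofReal_mul_I β
      rw [h2, one_mul]
      exact hvn s hs
    | succ d ih =>
      intro hdn s hs
      have hd' : d ≤ n := by omega
      obtain ⟨Z, hcard, hZsub, hZzero⟩ := hzeros β (n - (d + 1)) (by omega)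
      have hZne : Z.Nonempty := Finset.card_pos.1 (by omega)
      obtain ⟨ξ, hξ⟩ := hZne
      have hξI : ξ ∈ Icc A B := hZsub hξ
      have hz0 : g β (n - (d + 1)) ξ = 0 := hZzero ξ hξ
      have hkey : ∀ x ∈ Icc A B,
          HasDerivWithinAt (g β (n - (d + 1))) (g β (n - d) x) (Icc A B) x := by
        intro x hx
        have h := hgder β (n - (d + 1)) x (hABΩ hx)
        rw [show n - (d + 1) + 1 = n - d from by omega] at h
        exact h.hasDerivWithinAt
      have hbnd : ∀ x ∈ Icc A B, ‖g β (n - d) x‖ ≤ (B - A) ^ d * R := by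
        intro x hx; simpa [Real.norm_eq_abs] using ih hd' x hx
      have hm := (convex_Icc A B).norm_image_sub_le_of_norm_hasDerivWithin_le hkey hbnd hξI hs
      have hdist : ‖s - ξ‖ ≤ B - A := by
        rw [Real.norm_eq_abs, abs_sub_le_iff]
        constructor
        · linarith [hs.2, hξI.1]
        · linarith [hs.1, hξI.2]
      calc |g β (n - (d + 1)) s| = ‖g β (n - (d + 1)) s - g β (n - (d + 1)) ξ‖ := by
            rw [hz0]; simp [Real.norm_eq_abs]
        _ ≤ (B - A) ^ d * R * ‖s - ξ‖ := hm
        _ ≤ (B - A) ^ d * R * (B - A) :=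
            mul_le_mul_of_nonneg_left hdist (mul_nonneg (pow_nonneg hBA0 _) hR0)
        _ = (B - A) ^ (d + 1) * R := by ring
  -- choose the maximal weighted derivative
  obtain ⟨k0, hk0mem, hk0max⟩ := Finset.exists_max_image (Finset.range n)
    (fun j => (B - A) ^ j * M j) ⟨0, Finset.mem_range.2 hn⟩
  have hk0n : k0 < n := Finset.mem_range.1 hk0mem
  set Wm : ℝ := (B - A) ^ k0 * M k0 with hWmdef
  have hW0 : 0 ≤ Wm := mul_nonneg (pow_nonneg hBA0 _) (hM0 k0)
  rcases eq_or_lt_of_le hW0 with hW | hW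
  · have hM00 : M 0 ≤ Wm := by simpa using hk0max 0 (Finset.mem_range.2 hn)
    have hvA : ‖v 0 A‖ = 0 :=
      le_antisymm (by linarith [hMub 0 A (left_mem_Icc.2 hab.le)]) (norm_nonneg _)
    have hyA : y (γ A) = 0 := by
      have h := norm_eq_zero.1 hvA
      simpa [hvdef] using h
    exact hnz (γ A) (hγseg A (hsub (left_mem_Icc.2 hab.le))) hyA
  · obtain ⟨s0, hs0I, hs0⟩ := hMat k0
    obtain ⟨β, hβ⟩ := yak_exists_exp_im (v k0 s0)
    have h1 : M k0 ≤ (B - A) ^ (n - k0) * R := by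
      have hc := hchain β (n - k0) (Nat.sub_le n k0) s0 hs0I
      rw [show n - (n - k0) = k0 from by omega] at hc
      calc M k0 = ‖v k0 s0‖ := hs0.symm
        _ = (Complex.exp (↑β * Complex.I) * v k0 s0).im := hβ.symm
        _ ≤ |g β k0 s0| := le_abs_self _
        _ ≤ (B - A) ^ (n - k0) * R := hc
    have h2 : Wm ≤ (B - A) ^ n * R := by
      calc Wm = (B - A) ^ k0 * M k0 := rfl
        _ ≤ (B - A) ^ k0 * ((B - A) ^ (n - k0) * R) :=
            mul_le_mul_of_nonneg_left h1 (pow_nonneg hBA0 _)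
        _ = (B - A) ^ n * R := by
            rw [← mul_assoc, ← pow_add, show k0 + (n - k0) = n from by omega]
    have h3 : (B - A) ^ n * R ≤ (∑ j ∈ Finset.range n, C * ((B - A) * l) ^ (n - j)) * Wm := by
      rw [hRdef, Finset.mul_sum, Finset.sum_mul]
      refine Finset.sum_le_sum fun j hj => ?_
      have hj' : j < n := Finset.mem_range.1 hj
      have hterm : (B - A) ^ n * (C * l ^ (n - j) * M j)
          = C * ((B - A) * l) ^ (n - j) * ((B - A) ^ j * M j) := by
        rw [mul_pow, show (B - A) ^ n = (B - A) ^ (n - j) * (B - A) ^ j from by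
          rw [← pow_add]; congr 1; omega]
        ring
      rw [hterm]
      refine mul_le_mul_of_nonneg_left (hk0max j hj) ?_
      exact mul_nonneg (by linarith) (pow_nonneg (mul_nonneg hBA0 (norm_nonneg _)) _)
    have h4 : ∑ j ∈ Finset.range n, C * ((B - A) * l) ^ (n - j) < 1 :=
      yak_geom n ((B - A) * l) C (mul_nonneg hBA0 (norm_nonneg _)) hC hsmall
    have h5 := h2.trans h3
    nlinarith

theorem stmt5 (n : ℕ) (U : Set ℂ) (hU : IsOpen U) (z0 z1 : ℂ)
    (hseg : segment ℝ z0 z1 ⊆ U)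
    (a : ℕ → ℂ → ℂ) (ha : ∀ j < n, DifferentiableOn ℂ (a j) U)
    (C : ℝ) (hC : 1 ≤ C)
    (hbound : ∀ j < n, ∀ t ∈ segment ℝ z0 z1, ‖a j t‖ ≤ C)
    (y : ℂ → ℂ) (hy : DifferentiableOn ℂ y U)
    (hyD : ∀ j : ℕ, DifferentiableOn ℂ (iteratedDeriv j y) U)
    (hode : ∀ t ∈ U,
      iteratedDeriv n y t + ∑ j ∈ Finset.range n, a j t * iteratedDeriv j y t = 0)
    (hnz : ∀ t ∈ segment ℝ z0 z1, y t ≠ 0)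
    (θ : ℝ → ℝ) (hθ : ContinuousOn θ (Icc (0:ℝ) 1))
    (hbranch : ∀ s ∈ Icc (0:ℝ) 1,
      y (z0 + (s : ℂ) * (z1 - z0)) =
        (‖y (z0 + (s : ℂ) * (z1 - z0))‖ : ℂ) * Complex.exp (θ s * Complex.I)) :
    |θ 1 - θ 0| ≤ Real.pi * (n + 1) * (1 + ‖z1 - z0‖ * C / Real.log (3 / 2)) := by
  have hπ : (0:ℝ) < Real.pi := Real.pi_pos
  rcases Nat.eq_zero_or_pos n with hn0 | hn
  · subst hn0
    have h := hode z0 (hseg (left_mem_segment ℝ z0 z1))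
    simp [iteratedDeriv_zero] at h
    exact (hnz z0 (left_mem_segment ℝ z0 z1) h).elim
  · set ρ : ℝ := Real.log (3 / 2) with hρdef
    have hρ : 0 < ρ := Real.log_pos (by norm_num)
    set l : ℝ := ‖z1 - z0‖ with hldef
    have hl : 0 ≤ l := norm_nonneg _
    set x : ℝ := l * C / ρ with hxdef
    have hx0 : 0 ≤ x := div_nonneg (mul_nonneg hl (by linarith)) hρ.le
    set N : ℕ := max ⌈x⌉₊ 1 with hNdef
    have hN1 : 1 ≤ N := le_max_right _ _
    have hN0 : (0:ℝ) < (N:ℝ) := by exact_mod_cast hN1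
    have hxN : x ≤ (N:ℝ) := by
      refine (Nat.le_ceil x).trans ?_
      exact_mod_cast le_max_left _ _
    have hNx : (N:ℝ) ≤ 1 + x := by
      rw [hNdef]
      push_cast [Nat.cast_max]
      apply max_le
      · linarith [Nat.ceil_lt_add_one hx0]
      · linarith
    have hlC : l * C ≤ ρ * N := by
      rw [hxdef] at hxN
      rw [div_le_iff₀ hρ] at hxN
      linarith
    have hpiece : ∀ i : ℕ, i < N →
        |θ (((i:ℝ) + 1) / N) - θ ((i:ℝ) / N)| ≤ Real.pi * (n + 1) := by
      intro i hi
      have hiN : (i:ℝ) + 1 ≤ (N:ℝ) := by exact_mod_cast hi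
      have hi0 : (0:ℝ) ≤ (i:ℝ) := Nat.cast_nonneg i
      have hA : (0:ℝ) ≤ (i:ℝ) / N := div_nonneg hi0 hN0.le
      have hB : ((i:ℝ) + 1) / N ≤ 1 := by
        rw [div_le_one hN0]; exact hiN
      have hab : (i:ℝ) / N < ((i:ℝ) + 1) / N := by
        rw [div_lt_div_iff₀ hN0 hN0]
        nlinarith
      refine yak_piece n hn U hU z0 z1 hseg a C hC hbound y hyD hode hnz θ hθ hbranch
        _ _ hab hA hB ?_
      have hdiff : ((i:ℝ) + 1) / N - (i:ℝ) / N = 1 / N := by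
        field_simp
        ring
      rw [hdiff]
      rw [div_mul_eq_mul_div, div_mul_eq_mul_div, div_le_iff₀ hN0]
      calc 1 * l * C = l * C := by ring
        _ ≤ ρ * N := hlC
        _ = ρ * N := rfl
    have htel : θ 1 - θ 0 = ∑ i ∈ Finset.range N, (θ (((i:ℝ) + 1) / N) - θ ((i:ℝ) / N)) := by
      have h := Finset.sum_range_sub (fun i : ℕ => θ ((i:ℝ) / N)) N
      rw [show ((N:ℕ):ℝ) / N = 1 from div_self hN0.ne',
        show ((0:ℕ):ℝ) / N = 0 from by simp] at h
      rw [← h]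
      refine Finset.sum_congr rfl fun i _ => ?_
      push_cast
      ring_nf
    rw [htel]
    calc |∑ i ∈ Finset.range N, (θ (((i:ℝ) + 1) / N) - θ ((i:ℝ) / N))|
        ≤ ∑ i ∈ Finset.range N, |θ (((i:ℝ) + 1) / N) - θ ((i:ℝ) / N)| :=
          Finset.abs_sum_le_sum_abs _ _
      _ ≤ ∑ i ∈ Finset.range N, Real.pi * (n + 1) :=
          Finset.sum_le_sum fun i hi => hpiece i (Finset.mem_range.1 hi)
      _ = N * (Real.pi * (n + 1)) := by
          rw [Finset.sum_const, Finset.card_range, nsmul_eq_mul]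
      _ ≤ (1 + x) * (Real.pi * (n + 1)) := by
          refine mul_le_mul_of_nonneg_right hNx (by positivity)
      _ = Real.pi * (n + 1) * (1 + x) := by ring
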